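/- The minimum number N such that the Johnson graph J(n,k) admits a (0,1,*)-addressing of length N satisfies N_2(J(n,k)) ≤ k(n−k). -/

import Mathlib

/-- A `(0,1,*)`-addressing of length `N` of a graph `G`: `*` is `none`,
`0`/`1` are `some false` / `some true`; the distance between any two vertices equals
the number of coordinates where both entries are in `{0,1}` and differ. -/
def isAddressing {V : Type*} (G : SimpleGraph V) (N : ℕ)
    (f : V → Fin N → Option Bool) : Prop :=
  ∀ u v : V, G.dist u v =
    (Finset.univ.filter fun j : Fin N =>
      ∃ a b : Bool, f u j = some a ∧ f v j = some b ∧ a ≠ b).card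

/-- The Johnson graph `J(n,k)`. -/
def johnsonGraph (n k : ℕ) : SimpleGraph {S : Finset (Fin n) // S.card = k} where
  Adj S T := S ≠ T ∧ (S.1 ∩ T.1).card = k - 1
  symm := by
    constructor
    rintro S T ⟨h1, h2⟩
    exact ⟨h1.symm, by rwa [Finset.inter_comm]⟩
  loopless := by constructor; rintro S ⟨h1, _⟩; exact h1 rfl


open Finset SimpleGraph

namespace JohnsonAddr

variable {n k : ℕ}

lemma card_sdiff_comm {S T : Finset (Fin n)} (hS : S.card = k) (hT : T.card = k) :
    (T \ S).card = (S \ T).card := by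
  have h1 := Finset.card_inter_add_card_sdiff S T
  have h2 := Finset.card_inter_add_card_sdiff T S
  rw [Finset.inter_comm] at h2
  omega

lemma exists_walk (m : ℕ) : ∀ (S T : {S : Finset (Fin n) // S.card = k}),
    (S.1 \ T.1).card = m → ∃ W : (johnsonGraph n k).Walk S T, W.length = m := by
  induction m with
  | zero =>
    intro S T h
    have hsub : S.1 ⊆ T.1 := by
      rw [← Finset.sdiff_eq_empty_iff_subset]
      exact Finset.card_eq_zero.1 h
    have hST : S = T := Subtype.ext (Finset.eq_of_subset_of_card_le hsub (by rw [S.2, T.2]))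
    subst hST
    exact ⟨Walk.nil, rfl⟩
  | succ m ih =>
    intro S T h
    have hx : (S.1 \ T.1).Nonempty := by rw [← Finset.card_pos, h]; omega
    obtain ⟨x, hx⟩ := hx
    have hy : (T.1 \ S.1).Nonempty := by
      rw [← Finset.card_pos, card_sdiff_comm S.2 T.2, h]; omega
    obtain ⟨y, hy⟩ := hy
    rw [Finset.mem_sdiff] at hx hy
    set S' : Finset (Fin n) := insert y (S.1.erase x) with hS'
    have hyS : y ∉ S.1.erase x := fun hc => hy.2 (Finset.mem_of_mem_erase hc)
    have hk : 0 < k := S.2 ▸ Finset.card_pos.2 ⟨x, hx.1⟩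
    have hcard : S'.card = k := by
      rw [hS', Finset.card_insert_of_notMem hyS, Finset.card_erase_of_mem hx.1, S.2]
      omega
    have hinter : S.1 ∩ S' = S.1.erase x := by
      ext a
      simp only [hS', Finset.mem_inter, Finset.mem_insert, Finset.mem_erase]
      constructor
      · rintro ⟨ha, hc | hc⟩
        · exact absurd (hc ▸ ha) hy.2
        · exact ⟨hc.1, ha⟩
      · rintro ⟨h1, h2⟩
        exact ⟨h2, Or.inr ⟨h1, h2⟩⟩
    have hadj : (johnsonGraph n k).Adj S ⟨S', hcard⟩ := by
      constructor
      · intro hc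
        have hv : S.1 = S' := congrArg Subtype.val hc
        exact hy.2 (hv ▸ (Finset.mem_insert_self y _) : y ∈ S.1)
      · show (S.1 ∩ S').card = k - 1
        rw [hinter, Finset.card_erase_of_mem hx.1, S.2]
    have hnew : (S' \ T.1).card = m := by
      have heq : S' \ T.1 = (S.1 \ T.1).erase x := by
        ext a
        simp only [hS', Finset.mem_sdiff, Finset.mem_insert, Finset.mem_erase]
        constructor
        · rintro ⟨h1 | h1, h2⟩
          · exact absurd (h1 ▸ hy.1) h2
          · exact ⟨h1.1, h1.2, h2⟩
        · rintro ⟨h1, h2, h3⟩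
          exact ⟨Or.inr ⟨h1, h2⟩, h3⟩
      rw [heq, Finset.card_erase_of_mem (Finset.mem_sdiff.2 hx), h]
      omega
    obtain ⟨W, hW⟩ := ih ⟨S', hcard⟩ T hnew
    exact ⟨Walk.cons hadj W, by simp [hW]⟩

lemma le_walk_length : ∀ {S T : {S : Finset (Fin n) // S.card = k}}
    (W : (johnsonGraph n k).Walk S T), (S.1 \ T.1).card ≤ W.length := by
  intro S T W
  induction W with
  | nil => simp
  | @cons S U T hadj W ih =>
    obtain ⟨hne, hint⟩ := hadj
    have hk : 0 < k := by
      rcases Nat.eq_zero_or_pos k with h | h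
      · exfalso
        apply hne
        apply Subtype.ext
        rw [Finset.card_eq_zero.1 (S.2.trans h), Finset.card_eq_zero.1 (U.2.trans h)]
      · exact h
    have h1 : (S.1 \ U.1).card = 1 := by
      have := Finset.card_inter_add_card_sdiff S.1 U.1
      rw [hint, S.2] at this
      omega
    have hsub : S.1 \ T.1 ⊆ (S.1 \ U.1) ∪ (U.1 \ T.1) := by
      intro a ha
      rw [Finset.mem_sdiff] at ha
      by_cases h : a ∈ U.1
      · exact Finset.mem_union_right _ (Finset.mem_sdiff.2 ⟨h, ha.2⟩)
      · exact Finset.mem_union_left _ (Finset.mem_sdiff.2 ⟨ha.1, h⟩)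
    have hcalc : (S.1 \ T.1).card ≤ 1 + W.length := by
      calc (S.1 \ T.1).card ≤ ((S.1 \ U.1) ∪ (U.1 \ T.1)).card := Finset.card_le_card hsub
        _ ≤ (S.1 \ U.1).card + (U.1 \ T.1).card := Finset.card_union_le _ _
        _ ≤ 1 + W.length := by rw [h1]; exact Nat.add_le_add_left ih 1
    show (S.1 \ T.1).card ≤ W.length + 1; omega

lemma johnson_dist (S T : {S : Finset (Fin n) // S.card = k}) :
    (johnsonGraph n k).dist S T = (S.1 \ T.1).card := by
  obtain ⟨W, hW⟩ := exists_walk (S.1 \ T.1).card S T rfl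
  refine le_antisymm (hW ▸ SimpleGraph.dist_le W) ?_
  obtain ⟨P, hP⟩ := SimpleGraph.Reachable.exists_walk_length_eq_dist ⟨W⟩
  exact hP ▸ le_walk_length P

end JohnsonAddr
namespace JohnsonAddr

variable {n k : ℕ}

/-- The increasing enumeration of a `k`-subset. -/
def emb (S : {S : Finset (Fin n) // S.card = k}) : Fin k ↪o Fin n :=
  S.1.orderEmbOfFin S.2

lemma emb_mem (S : {S : Finset (Fin n) // S.card = k}) (r : Fin k) : emb S r ∈ S.1 :=
  Finset.orderEmbOfFin_mem _ _ _

lemma emb_strictMono (S : {S : Finset (Fin n) // S.card = k}) : StrictMono (emb S) :=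
  (S.1.orderEmbOfFin S.2).strictMono

lemma emb_surj (S : {S : Finset (Fin n) // S.card = k}) {a : Fin n} (ha : a ∈ S.1) :
    ∃ r, emb S r = a := by
  have h : a ∈ Set.range (S.1.orderEmbOfFin S.2) := by
    rw [Finset.range_orderEmbOfFin]
    exact ha
  exact h

lemma strictMono_le {m l : ℕ} {f : Fin m → Fin l} (hf : StrictMono f) :
    ∀ (v : ℕ) (hv : v < m), v ≤ (f ⟨v, hv⟩ : ℕ) := by
  intro v
  induction v with
  | zero => intro hv; exact Nat.zero_le _
  | succ p ih =>
    intro hv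
    have hp : p < m := by omega
    have h1 := ih hp
    have h2 : f ⟨p, hp⟩ < f ⟨p + 1, hv⟩ := hf (by simp [Fin.lt_def])
    rw [Fin.lt_def] at h2
    omega

lemma emb_lb (S : {S : Finset (Fin n) // S.card = k}) (r : Fin k) :
    (r : ℕ) ≤ (emb S r : ℕ) := by
  have h := strictMono_le (emb_strictMono S) r r.isLt
  simpa using h

lemma emb_ub (S : {S : Finset (Fin n) // S.card = k}) (r : Fin k) :
    (emb S r : ℕ) + k ≤ n + r := by
  have hrev : StrictMono (fun i : Fin k => (emb S i.rev).rev) := by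
    intro a b hab
    exact Fin.rev_lt_rev.2 (emb_strictMono S (Fin.rev_lt_rev.2 hab))
  have h := strictMono_le hrev (r.rev : ℕ) r.rev.isLt
  have he : (⟨(r.rev : ℕ), r.rev.isLt⟩ : Fin k) = r.rev := rfl
  rw [he, Fin.rev_rev] at h
  rw [Fin.val_rev, Fin.val_rev] at h
  have h1 := r.isLt
  have h2 := (emb S r).isLt
  omega

lemma rj_lt (r : Fin k) (j : Fin (n - k)) : (r : ℕ) + (j : ℕ) < n := by
  have h1 := r.isLt
  have h2 := j.isLt
  omega

/-- One block of the addressing: row `r`, column `j`. -/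
def g (S : {S : Finset (Fin n) // S.card = k}) (r : Fin k) (j : Fin (n - k)) : Option Bool :=
  if (r : ℕ) + (j : ℕ) < (emb S r : ℕ) then
    (if (⟨(r : ℕ) + (j : ℕ), rj_lt r j⟩ : Fin n) ∈ S.1 then none else some true)
  else if (r : ℕ) + (j : ℕ) = (emb S r : ℕ) then some false else none

lemma g_false_iff (S : {S : Finset (Fin n) // S.card = k}) (r : Fin k) (j : Fin (n - k)) :
    g S r j = some false ↔ (r : ℕ) + (j : ℕ) = (emb S r : ℕ) := by
  unfold g
  split_ifs with h1 hm h2 <;> simp <;> omega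

lemma g_true_iff (S : {S : Finset (Fin n) // S.card = k}) (r : Fin k) (j : Fin (n - k)) :
    g S r j = some true ↔ ((r : ℕ) + (j : ℕ) < (emb S r : ℕ) ∧
      (⟨(r : ℕ) + (j : ℕ), rj_lt r j⟩ : Fin n) ∉ S.1) := by
  unfold g
  split_ifs with h1 hm h2 <;> simp_all

lemma diff_iff (x y : Option Bool) :
    (∃ a b : Bool, x = some a ∧ y = some b ∧ a ≠ b) ↔
      ((x = some false ∧ y = some true) ∨ (x = some true ∧ y = some false)) := by
  constructor
  · rintro ⟨a, b, rfl, rfl, hab⟩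
    cases a <;> cases b <;> simp_all
  · rintro (⟨rfl, rfl⟩ | ⟨rfl, rfl⟩) <;> exact ⟨_, _, rfl, rfl, by simp⟩

end JohnsonAddr
namespace JohnsonAddr

variable {n k : ℕ}

lemma block_eq (S T : {S : Finset (Fin n) // S.card = k}) (r : Fin k)
    (hst : (emb S r : ℕ) = (emb T r : ℕ)) :
    (Finset.univ.filter fun j : Fin (n - k) =>
      ∃ a b : Bool, g S r j = some a ∧ g T r j = some b ∧ a ≠ b).card = 0 := by
  rw [Finset.card_eq_zero, Finset.filter_eq_empty_iff]
  intro j _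
  rw [diff_iff]
  rintro (⟨h1, h2⟩ | ⟨h1, h2⟩)
  · rw [g_false_iff] at h1
    rw [g_true_iff] at h2
    omega
  · rw [g_true_iff] at h1
    rw [g_false_iff] at h2
    have := h1.1
    omega

lemma block_lt (S T : {S : Finset (Fin n) // S.card = k}) (r : Fin k)
    (hst : (emb S r : ℕ) < (emb T r : ℕ)) :
    (Finset.univ.filter fun j : Fin (n - k) =>
      ∃ a b : Bool, g S r j = some a ∧ g T r j = some b ∧ a ≠ b).card
      = if emb S r ∈ T.1 then 0 else 1 := by
  split_ifs with hmem
  · rw [Finset.card_eq_zero, Finset.filter_eq_empty_iff]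
    intro j _
    rw [diff_iff]
    rintro (⟨h1, h2⟩ | ⟨h1, h2⟩)
    · rw [g_false_iff] at h1
      rw [g_true_iff] at h2
      apply h2.2
      have heq : (⟨(r : ℕ) + (j : ℕ), rj_lt r j⟩ : Fin n) = emb S r := Fin.ext h1
      rw [heq]
      exact hmem
    · rw [g_true_iff] at h1
      rw [g_false_iff] at h2
      have := h1.1
      omega
  · have hr := emb_lb S r
    have hub := emb_ub T r
    have hrk := r.isLt
    have hj0 : (emb S r : ℕ) - r < n - k := by omega
    have hset : (Finset.univ.filter fun j : Fin (n - k) =>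
        ∃ a b : Bool, g S r j = some a ∧ g T r j = some b ∧ a ≠ b)
        = {(⟨(emb S r : ℕ) - r, hj0⟩ : Fin (n - k))} := by
      ext j
      simp only [Finset.mem_filter, Finset.mem_univ, true_and, Finset.mem_singleton]
      rw [diff_iff]
      constructor
      · rintro (⟨h1, h2⟩ | ⟨h1, h2⟩)
        · rw [g_false_iff] at h1
          exact Fin.ext (by simp; omega)
        · rw [g_true_iff] at h1
          rw [g_false_iff] at h2
          have := h1.1
          omega
      · rintro rfl
        left
        have hval : (r : ℕ) + ((emb S r : ℕ) - r) = (emb S r : ℕ) := by omega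
        constructor
        · rw [g_false_iff]
          simpa using hval
        · rw [g_true_iff]
          constructor
          · simp
            omega
          · have heq : (⟨(r : ℕ) + ((⟨(emb S r : ℕ) - r, hj0⟩ : Fin (n - k)) : ℕ),
                rj_lt r _⟩ : Fin n) = emb S r := Fin.ext (by simpa using hval)
            rw [heq]
            exact hmem
    rw [hset, Finset.card_singleton]

lemma block_card (S T : {S : Finset (Fin n) // S.card = k}) (r : Fin k) :
    (Finset.univ.filter fun j : Fin (n - k) =>
      ∃ a b : Bool, g S r j = some a ∧ g T r j = some b ∧ a ≠ b).card
      = (if (emb S r : ℕ) < (emb T r : ℕ) ∧ emb S r ∉ T.1 then 1 else 0)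
        + (if (emb T r : ℕ) < (emb S r : ℕ) ∧ emb T r ∉ S.1 then 1 else 0) := by
  rcases lt_trichotomy ((emb S r : ℕ)) ((emb T r : ℕ)) with h | h | h
  · rw [block_lt S T r h]
    rw [if_neg (fun hc => by have := hc.1; omega : ¬((emb T r : ℕ) < (emb S r : ℕ) ∧ emb T r ∉ S.1))]
    by_cases hm : emb S r ∈ T.1
    · rw [if_pos hm, if_neg (fun hc => hc.2 hm)]
    · rw [if_neg hm, if_pos ⟨h, hm⟩]
  · rw [block_eq S T r h]
    rw [if_neg (fun hc => by have := hc.1; omega : ¬((emb S r : ℕ) < (emb T r : ℕ) ∧ emb S r ∉ T.1))]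
    rw [if_neg (fun hc => by have := hc.1; omega : ¬((emb T r : ℕ) < (emb S r : ℕ) ∧ emb T r ∉ S.1))]
  · have hswap : (Finset.univ.filter fun j : Fin (n - k) =>
        ∃ a b : Bool, g S r j = some a ∧ g T r j = some b ∧ a ≠ b)
        = (Finset.univ.filter fun j : Fin (n - k) =>
          ∃ a b : Bool, g T r j = some a ∧ g S r j = some b ∧ a ≠ b) := by
      apply Finset.filter_congr
      intro j _
      constructor
      · rintro ⟨a, b, h1, h2, h3⟩
        exact ⟨b, a, h2, h1, h3.symm⟩
      · rintro ⟨a, b, h1, h2, h3⟩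
        exact ⟨b, a, h2, h1, h3.symm⟩
    rw [hswap, block_lt T S r h]
    rw [if_neg (fun hc => by have := hc.1; omega : ¬((emb S r : ℕ) < (emb T r : ℕ) ∧ emb S r ∉ T.1))]
    by_cases hm : emb T r ∈ S.1
    · rw [if_pos hm, if_neg (fun hc => hc.2 hm)]
    · rw [if_neg hm, if_pos ⟨h, hm⟩]

end JohnsonAddr
namespace JohnsonAddr

variable {n k : ℕ}

lemma emb_symm_apply (S : {S : Finset (Fin n) // S.card = k}) {a : Fin n} (ha : a ∈ S.1) :
    emb S ((S.1.orderIsoOfFin S.2).symm ⟨a, ha⟩) = a := by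
  have h := (S.1.orderIsoOfFin S.2).apply_symm_apply ⟨a, ha⟩
  exact congrArg Subtype.val h

lemma orderIso_symm_eq (S : {S : Finset (Fin n) // S.card = k}) {a : Fin n} (ha : a ∈ S.1)
    {q : Fin k} (h : emb S q = a) :
    (S.1.orderIsoOfFin S.2).symm ⟨a, ha⟩ = q := by
  have heq : (⟨a, ha⟩ : {x // x ∈ S.1}) = (S.1.orderIsoOfFin S.2) q :=
    Subtype.ext (by subst h; rfl)
  rw [heq, OrderIso.symm_apply_apply]

lemma emb_lt_iff (S : {S : Finset (Fin n) // S.card = k}) {p q : Fin k} :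
    (emb S p : ℕ) < (emb S q : ℕ) ↔ p < q := by
  rw [← Fin.lt_def]
  exact (emb_strictMono S).lt_iff_lt

/-- Within rows where `t_r < s_r`, the number of rows with
`t_r ∈ S` equals the number of rows with `s_r ∈ T`. -/
lemma claimC (S T : {S : Finset (Fin n) // S.card = k}) :
    ((Finset.univ.filter fun r : Fin k => (emb T r : ℕ) < (emb S r : ℕ) ∧ emb T r ∈ S.1)).card
      = ((Finset.univ.filter fun r : Fin k =>
          (emb T r : ℕ) < (emb S r : ℕ) ∧ emb S r ∈ T.1)).card := by
  apply Finset.card_bij (fun r hr =>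
    (S.1.orderIsoOfFin S.2).symm ⟨emb T r, (Finset.mem_filter.1 hr).2.2⟩)
  · intro r hr
    obtain ⟨-, hlt, hmem⟩ := Finset.mem_filter.1 hr
    have hSq : emb S ((S.1.orderIsoOfFin S.2).symm ⟨emb T r, hmem⟩) = emb T r :=
      emb_symm_apply S hmem
    set q := (S.1.orderIsoOfFin S.2).symm ⟨emb T r, hmem⟩ with hq
    have hqr : q < r := by
      rw [← emb_lt_iff S, hSq]
      exact hlt
    rw [Finset.mem_filter]
    exact ⟨Finset.mem_univ _, by rw [hSq]; exact (emb_lt_iff T).2 hqr,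
      by rw [hSq]; exact emb_mem T r⟩
  · intro r1 hr1 r2 hr2 heq
    have h1 := emb_symm_apply S (Finset.mem_filter.1 hr1).2.2
    have h2 := emb_symm_apply S (Finset.mem_filter.1 hr2).2.2
    have : emb T r1 = emb T r2 := by rw [← h1, ← h2, heq]
    exact (emb_strictMono T).injective this
  · intro q hq
    obtain ⟨-, hlt, hmem⟩ := Finset.mem_filter.1 hq
    have hTr : emb T ((T.1.orderIsoOfFin T.2).symm ⟨emb S q, hmem⟩) = emb S q :=
      emb_symm_apply T hmem
    set r := (T.1.orderIsoOfFin T.2).symm ⟨emb S q, hmem⟩ with hrdef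
    have hqr : q < r := by
      rw [← emb_lt_iff T, hTr]
      exact hlt
    have hrmem : r ∈ Finset.univ.filter fun r : Fin k =>
        (emb T r : ℕ) < (emb S r : ℕ) ∧ emb T r ∈ S.1 := by
      rw [Finset.mem_filter]
      exact ⟨Finset.mem_univ _, by rw [hTr]; exact (emb_lt_iff S).2 hqr,
        by rw [hTr]; exact emb_mem S q⟩
    exact ⟨r, hrmem, orderIso_symm_eq S _ hTr.symm⟩

/-- The main counting identity. -/
lemma key (S T : {S : Finset (Fin n) // S.card = k}) :
    ((Finset.univ.filter fun r : Fin k => (emb S r : ℕ) < (emb T r : ℕ) ∧ emb S r ∉ T.1)).card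
      + ((Finset.univ.filter fun r : Fin k =>
          (emb T r : ℕ) < (emb S r : ℕ) ∧ emb T r ∉ S.1)).card
      = (S.1 \ T.1).card := by
  -- replace second summand using claimC (complement within V)
  have hV1 := Finset.card_filter_add_card_filter_not
    (s := Finset.univ.filter fun r : Fin k => (emb T r : ℕ) < (emb S r : ℕ))
    (p := fun r => emb T r ∈ S.1)
  have hV2 := Finset.card_filter_add_card_filter_not
    (s := Finset.univ.filter fun r : Fin k => (emb T r : ℕ) < (emb S r : ℕ))
    (p := fun r => emb S r ∈ T.1)
  rw [Finset.filter_filter, Finset.filter_filter] at hV1 hV2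
  have hC := claimC S T
  have hswap : ((Finset.univ.filter fun r : Fin k =>
      (emb T r : ℕ) < (emb S r : ℕ) ∧ emb T r ∉ S.1)).card
      = ((Finset.univ.filter fun r : Fin k =>
        (emb T r : ℕ) < (emb S r : ℕ) ∧ emb S r ∉ T.1)).card := by
    omega
  rw [hswap]
  -- now both conditions end with `emb S r ∉ T.1`; partition that set by the comparison
  have hsplit := Finset.card_filter_add_card_filter_not
    (s := Finset.univ.filter fun r : Fin k => emb S r ∉ T.1)
    (p := fun r => (emb S r : ℕ) < (emb T r : ℕ))
  rw [Finset.filter_filter, Finset.filter_filter] at hsplit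
  have e1 : (Finset.univ.filter fun r : Fin k => emb S r ∉ T.1 ∧ (emb S r : ℕ) < (emb T r : ℕ))
      = Finset.univ.filter fun r : Fin k => (emb S r : ℕ) < (emb T r : ℕ) ∧ emb S r ∉ T.1 := by
    apply Finset.filter_congr
    intro r _
    exact and_comm
  have e2 : (Finset.univ.filter fun r : Fin k => emb S r ∉ T.1 ∧ ¬(emb S r : ℕ) < (emb T r : ℕ))
      = Finset.univ.filter fun r : Fin k => (emb T r : ℕ) < (emb S r : ℕ) ∧ emb S r ∉ T.1 := by
    apply Finset.filter_congr
    intro r _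
    constructor
    · rintro ⟨hnm, hnlt⟩
      refine ⟨?_, hnm⟩
      rcases Nat.lt_or_ge (emb T r : ℕ) (emb S r : ℕ) with h | h
      · exact h
      · exfalso
        apply hnm
        have : (emb S r : ℕ) = (emb T r : ℕ) := by omega
        have heq : emb S r = emb T r := Fin.ext this
        rw [heq]
        exact emb_mem T r
    · rintro ⟨hlt, hnm⟩
      exact ⟨hnm, by omega⟩
  rw [e1, e2] at hsplit
  -- finally, the set `{r | emb S r ∉ T.1}` is in bijection with `S.1 \ T.1`
  have hfin : ((Finset.univ.filter fun r : Fin k => emb S r ∉ T.1)).card = (S.1 \ T.1).card := by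
    apply Finset.card_bij (fun r _ => emb S r)
    · intro r hr
      rw [Finset.mem_sdiff]
      exact ⟨emb_mem S r, (Finset.mem_filter.1 hr).2⟩
    · intro r1 _ r2 _ heq
      exact (emb_strictMono S).injective heq
    · intro a ha
      rw [Finset.mem_sdiff] at ha
      obtain ⟨r, hr⟩ := emb_surj S ha.1
      exact ⟨r, Finset.mem_filter.2 ⟨Finset.mem_univ _, hr ▸ ha.2⟩, hr⟩
  omega

end JohnsonAddr
namespace JohnsonAddr

variable {n k : ℕ}

lemma count_eq (S T : {S : Finset (Fin n) // S.card = k}) :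
    ((Finset.univ.filter fun idx : Fin (k * (n - k)) =>
      ∃ a b : Bool, g S (finProdFinEquiv.symm idx).1 (finProdFinEquiv.symm idx).2 = some a ∧
        g T (finProdFinEquiv.symm idx).1 (finProdFinEquiv.symm idx).2 = some b ∧ a ≠ b)).card
      = (S.1 \ T.1).card := by
  rw [Finset.card_filter]
  rw [← Equiv.sum_comp (finProdFinEquiv : Fin k × Fin (n - k) ≃ Fin (k * (n - k)))]
  simp only [Equiv.symm_apply_apply]
  rw [Fintype.sum_prod_type]
  have hblock : ∀ r : Fin k, (∑ j : Fin (n - k),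
      if (∃ a b : Bool, g S r j = some a ∧ g T r j = some b ∧ a ≠ b) then 1 else 0)
      = (if (emb S r : ℕ) < (emb T r : ℕ) ∧ emb S r ∉ T.1 then 1 else 0)
        + (if (emb T r : ℕ) < (emb S r : ℕ) ∧ emb T r ∉ S.1 then 1 else 0) := by
    intro r
    rw [← Finset.card_filter]
    exact block_card S T r
  rw [Finset.sum_congr rfl (fun r _ => hblock r), Finset.sum_add_distrib,
    ← Finset.card_filter, ← Finset.card_filter]
  exact key S T

end JohnsonAddr

/-- `N₂(J(n,k)) ≤ k(n-k)`: the Johnson graph has a `(0,1,*)`-addressing of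
length `k(n-k)`. -/
theorem johnson_addressing (n k : ℕ) (hk : k ≤ n) :
    ∃ f : {S : Finset (Fin n) // S.card = k} → Fin (k * (n - k)) → Option Bool,
      isAddressing (johnsonGraph n k) (k * (n - k)) f := by
  refine ⟨fun S idx =>
    JohnsonAddr.g S (finProdFinEquiv.symm idx).1 (finProdFinEquiv.symm idx).2, ?_⟩
  intro u v
  rw [JohnsonAddr.johnson_dist u v]
  exact (JohnsonAddr.count_eq u v).symm
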